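/- In the 15-vertex graph Ĥ (path a–b–c–d–e–f–g, universal vertices u₁,u₂,u₃, and degree-2 vertices v₁,…,v₅ with edges v₁a, v₁u₂, v₂u₂, v₂g, v₃b, v₃u₃, v₄u₃, v₄f, v₅e, v₅u₁), the cycle C = a v₁ u₂ v₂ g u₁ v₅ e f v₄ u₃ v₃ b a is not extendable: there is no cycle C' in Ĥ with V(C') = V(C) ∪ {w} for w ∈ {c, d}. -/

import Mathlib

open SimpleGraph

/-- A graph is chordal if every cycle of length at least 4 has a chord:
an edge between two vertices of the cycle that is not an edge of the cycle. -/
def Chordal {V : Type*} (G : SimpleGraph V) : Prop :=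
  ∀ ⦃v : V⦄ (c : G.Walk v v), c.IsCycle → 4 ≤ c.length →
    ∃ x y, x ∈ c.support ∧ y ∈ c.support ∧ G.Adj x y ∧ s(x, y) ∉ c.edges

/-- The underlying relation of the `k`-sun: `Sum.inr` vertices form the clique
`{y_1, …, y_k}`, `Sum.inl` vertices form the independent set `{x_1, …, x_k}`,
and `x_i` is adjacent exactly to `y_i` and `y_{(i mod k)+1}`. -/
def sunRel (k : ℕ) : (Fin k ⊕ Fin k) → (Fin k ⊕ Fin k) → Prop
  | Sum.inr _, Sum.inr _ => True
  | Sum.inl i, Sum.inr j => j.val = i.val ∨ j.val = (i.val + 1) % k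
  | _, _ => False

/-- The `k`-sun graph. -/
def sunGraph (k : ℕ) : SimpleGraph (Fin k ⊕ Fin k) := SimpleGraph.fromRel (sunRel k)

/-- A graph is strongly chordal if it is chordal and has no induced `k`-sun for `k ≥ 3`. -/
def StronglyChordal {V : Type*} (G : SimpleGraph V) : Prop :=
  Chordal G ∧ ∀ k, 3 ≤ k → IsEmpty (sunGraph k ↪g G)

/-- The graph obtained from `G` by adding a universal vertex (`none`). -/
def addUniversal {V : Type*} (G : SimpleGraph V) : SimpleGraph (Option V) :=
  SimpleGraph.fromRel (fun x y =>
    match x, y with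
    | some a, some b => G.Adj a b
    | _, _ => True)

/-- The graph obtained from `G` by adding a true twin (`none`) of the vertex `u`. -/
def addTwin {V : Type*} (G : SimpleGraph V) (u : V) : SimpleGraph (Option V) :=
  SimpleGraph.fromRel (fun x y =>
    match x, y with
    | some a, some b => G.Adj a b
    | none, some a => a = u ∨ G.Adj u a
    | some a, none => a = u ∨ G.Adj u a
    | none, none => False)

/-- A vertex is simplicial if its neighborhood is a clique. -/
def IsSimplicial {V : Type*} (G : SimpleGraph V) (v : V) : Prop :=
  ∀ ⦃a b : V⦄, G.Adj v a → G.Adj v b → a ≠ b → G.Adj a b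

/-- `Q` is (the vertex set of) a connected component of `G − A`. -/
def IsCompOf {V : Type*} (G : SimpleGraph V) (A Q : Set V) : Prop :=
  Disjoint Q A ∧ (G.induce Q).Connected ∧
    ∀ a ∈ Q, ∀ b, b ∉ A → G.Adj a b → b ∈ Q

/-- The set of neighbors of a vertex set `Q`: vertices outside `Q` adjacent to some
vertex of `Q`. -/
def setNbhd {V : Type*} (G : SimpleGraph V) (Q : Set V) : Set V :=
  {b | b ∉ Q ∧ ∃ a ∈ Q, G.Adj a b}

/-- A cycle `c` is extendable if there is a cycle whose vertex set consists of the
vertices of `c` together with exactly one additional vertex. -/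
def CycleExtendable {V : Type*} (G : SimpleGraph V) {v : V} (c : G.Walk v v) : Prop :=
  ∃ (w : V) (u : V) (c' : G.Walk u u), c'.IsCycle ∧ w ∉ c.support ∧
    ∀ y, y ∈ c'.support ↔ (y ∈ c.support ∨ y = w)

/-- The edges of the graph `Ĥ`: vertices `a,…,g` of the path are `0,…,6`, the
universal vertices `u₁,u₂,u₃` are `7,8,9`, and the vertices `v₁,…,v₅` are `10,…,14`. -/
def hhatEdges : List (ℕ × ℕ) :=
  [(0, 1), (1, 2), (2, 3), (3, 4), (4, 5), (5, 6),
   (7, 0), (7, 1), (7, 2), (7, 3), (7, 4), (7, 5), (7, 6),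
   (8, 0), (8, 1), (8, 2), (8, 3), (8, 4), (8, 5), (8, 6),
   (9, 0), (9, 1), (9, 2), (9, 3), (9, 4), (9, 5), (9, 6),
   (7, 8), (7, 9), (8, 9),
   (10, 0), (10, 8), (11, 8), (11, 6), (12, 1), (12, 9), (13, 9), (13, 5),
   (14, 4), (14, 7)]

/-- The graph `Ĥ`: a path `a b c d e f g`, three universal vertices `u₁, u₂, u₃`,
and five degree-2 vertices `v₁,…,v₅` with the heavy edges
`v₁a, v₁u₂, v₂u₂, v₂g, v₃b, v₃u₃, v₄u₃, v₄f, v₅e, v₅u₁`. -/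
def Hhat : SimpleGraph (Fin 15) :=
  SimpleGraph.fromRel (fun i j => (i.val, j.val) ∈ hhatEdges)

instance : DecidableRel Hhat.Adj := fun a b =>
  inferInstanceAs (Decidable (a ≠ b ∧
    ((a.val, b.val) ∈ hhatEdges ∨ (b.val, a.val) ∈ hhatEdges)))
/-- The cycle `C = a v₁ u₂ v₂ g u₁ v₅ e f v₄ u₃ v₃ b a` in `Ĥ`,
i.e. `0 10 8 11 6 7 14 4 5 13 9 12 1 0`. -/
def Cwalk : Hhat.Walk 0 0 :=
  .cons (show Hhat.Adj 0 10 by decide) (.cons (show Hhat.Adj 10 8 by decide)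
    (.cons (show Hhat.Adj 8 11 by decide) (.cons (show Hhat.Adj 11 6 by decide)
    (.cons (show Hhat.Adj 6 7 by decide) (.cons (show Hhat.Adj 7 14 by decide)
    (.cons (show Hhat.Adj 14 4 by decide) (.cons (show Hhat.Adj 4 5 by decide)
    (.cons (show Hhat.Adj 5 13 by decide) (.cons (show Hhat.Adj 13 9 by decide)
    (.cons (show Hhat.Adj 9 12 by decide) (.cons (show Hhat.Adj 12 1 by decide)
    (.cons (show Hhat.Adj 1 0 by decide) .nil))))))))))))

open SimpleGraph

lemma aux_getVert_getElem {V : Type*} {G : SimpleGraph V} :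
    ∀ {u v : V} (p : G.Walk u v) (i : ℕ), i ≤ p.length →
      p.support[i]? = some (p.getVert i) := by
  intro u v p
  induction p with
  | nil =>
    intro i hi
    simp only [SimpleGraph.Walk.length_nil, Nat.le_zero] at hi
    subst hi; rfl
  | cons h q ih =>
    intro i hi
    cases i with
    | zero => simp [SimpleGraph.Walk.support_cons]
    | succ n =>
      rw [SimpleGraph.Walk.support_cons, List.getElem?_cons_succ, SimpleGraph.Walk.getVert_cons_succ]
      exact ih n (by simpa using hi)

lemma aux_cycle_getVert_inj {V : Type*} {G : SimpleGraph V} {v : V} {c : G.Walk v v}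
    (hc : c.IsCycle) {i j : ℕ} (hi1 : 1 ≤ i) (hi2 : i ≤ c.length) (hj1 : 1 ≤ j)
    (hj2 : j ≤ c.length) (h : c.getVert i = c.getVert j) : i = j := by
  have hn := hc.support_nodup
  have hlen : c.support.tail.length = c.length := by
    have := c.length_support
    rw [List.length_tail, this]; omega
  have key : ∀ k, 1 ≤ k → k ≤ c.length → c.support.tail[k-1]? = some (c.getVert k) := by
    intro k hk1 hk2
    have h1 := aux_getVert_getElem c k hk2
    rw [c.support_eq_cons] at h1
    rcases Nat.exists_eq_add_of_le hk1 with ⟨m, rfl⟩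
    rw [show 1 + m = m + 1 by omega] at h1
    rw [show 1 + m - 1 = m by omega, show 1 + m = m + 1 by omega, c.support_eq_cons]
    simpa using h1
  have e1 := key i hi1 hi2
  have e2 := key j hj1 hj2
  rw [h] at e1
  have := (List.getElem?_inj (by omega : i - 1 < c.support.tail.length) hn).1 (e1.trans e2.symm)
  omega

lemma aux_cycle_two_nbrs {V : Type*} {G : SimpleGraph V} {v : V} {c : G.Walk v v}
    (hc : c.IsCycle) {x : V} (hx : x ∈ c.support) :
    ∃ a b, a ≠ b ∧ c.toSubgraph.Adj x a ∧ c.toSubgraph.Adj x b ∧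
      ∀ z, c.toSubgraph.Adj x z → z = a ∨ z = b := by
  have hn3 : 3 ≤ c.length := hc.three_le_length
  obtain ⟨k0, hk0, hk0le⟩ := SimpleGraph.Walk.mem_support_iff_exists_getVert.1 hx
  obtain ⟨k, hk, hk1, hk2⟩ : ∃ k, c.getVert k = x ∧ 1 ≤ k ∧ k ≤ c.length := by
    rcases Nat.eq_zero_or_pos k0 with rfl | hpos
    · exact ⟨c.length, by rw [c.getVert_length, ← hk0, c.getVert_zero], by omega, le_rfl⟩
    · exact ⟨k0, hk0, hpos, hk0le⟩
  have hv0 : c.getVert 0 = v := c.getVert_zero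
  have hvn : c.getVert c.length = v := c.getVert_length
  set n := c.length with hn
  set ia := if k = 1 then n else k - 1 with hia
  set ib := if k = n then 1 else k + 1 with hib
  refine ⟨c.getVert ia, c.getVert ib, ?_, ?_, ?_, ?_⟩
  · -- a ≠ b
    intro he
    have h1 : 1 ≤ ia := by rw [hia]; split <;> omega
    have h2 : ia ≤ n := by rw [hia]; split <;> omega
    have h3 : 1 ≤ ib := by rw [hib]; split <;> omega
    have h4 : ib ≤ n := by rw [hib]; split <;> omega
    have := aux_cycle_getVert_inj hc h1 h2 h3 h4 he
    rw [hia, hib] at this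
    split at this <;> split at this <;> omega
  · -- adj x a
    have key : c.toSubgraph.Adj (c.getVert ia) (c.getVert k) := by
      rcases eq_or_ne k 1 with rfl | hne
      · have h' := SimpleGraph.Walk.toSubgraph_adj_getVert c (i := 0) (by omega)
        rw [hv0] at h'
        rw [hia, if_pos rfl, hvn]
        exact h'
      · rw [hia, if_neg hne, show k = (k-1) + 1 by omega]
        rw [show k - 1 + 1 - 1 = k - 1 by omega]
        exact c.toSubgraph_adj_getVert (by omega)
    rw [hk] at key
    exact key.symm
  · -- adj x b
    have key : c.toSubgraph.Adj (c.getVert k) (c.getVert ib) := by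
      rcases eq_or_ne k n with rfl | hne
      · have h' := SimpleGraph.Walk.toSubgraph_adj_getVert c (i := 0) (by omega)
        rw [hv0] at h'
        rw [hib, if_pos rfl, hvn]
        exact h'
      · rw [hib, if_neg hne]
        exact c.toSubgraph_adj_getVert (by omega)
    rw [hk] at key
    exact key
  · -- uniqueness
    intro z hz
    rw [SimpleGraph.Walk.toSubgraph_adj_iff] at hz
    obtain ⟨i, hi, hilt⟩ := hz
    rw [Sym2.eq_iff] at hi
    rcases hi with ⟨hix, hiz⟩ | ⟨hiz, hix⟩
    · rcases Nat.eq_zero_or_pos i with rfl | hpos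
      · have heq : c.getVert n = c.getVert k := by
          rw [hk, ← hix, hv0, hvn]
        have hkn : k = n := (aux_cycle_getVert_inj hc (by omega) le_rfl hk1 hk2 heq).symm
        right; rw [hib, if_pos hkn, ← hiz]
      · have : i = k := aux_cycle_getVert_inj hc hpos (by omega) hk1 hk2 (hix.trans hk.symm)
        subst this
        right; rw [hib, if_neg (by omega), ← hiz]
    · have hik : i + 1 = k := aux_cycle_getVert_inj hc (by omega) (by omega) hk1 hk2 (hix.trans hk.symm)
      left
      rcases eq_or_ne k 1 with hk1' | hne
      · rw [hia, if_pos hk1', ← hiz, show i = 0 by omega, hv0, hvn]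
      · rw [hia, if_neg hne, ← hiz, show k - 1 = i by omega]

lemma aux_closed_walk {V : Type*} {G : SimpleGraph V} (H : G.Subgraph) (A : Set V)
    (hA : ∀ ⦃x y⦄, x ∈ A → H.Adj x y → y ∈ A) :
    ∀ {a b : V} (p : G.Walk a b), p.toSubgraph ≤ H → a ∈ A → b ∈ A := by
  intro a b p
  induction p with
  | nil => exact fun _ h => h
  | @cons a c b h q ih =>
    intro hle ha
    have h1 : (G.subgraphOfAdj h) ≤ H := le_trans le_sup_left hle
    have h2 : q.toSubgraph ≤ H := le_trans le_sup_right hle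
    exact ih h2 (hA ha (h1.2 (by simp)))

lemma aux_two_of_sub {α : Type*} {P : α → Prop} {p q : α} (hpq : p ≠ q)
    (hsub : ∀ z, P z → z = p ∨ z = q)
    (h : ∃ a b, a ≠ b ∧ P a ∧ P b ∧ ∀ z, P z → z = a ∨ z = b) :
    P p ∧ P q := by
  obtain ⟨a, b, hab, ha, hb, _⟩ := h
  rcases hsub a ha with rfl | rfl <;> rcases hsub b hb with rfl | rfl <;>
    first | exact absurd rfl hab | exact ⟨ha, hb⟩ | exact ⟨hb, ha⟩

lemma aux_sat_of_two {α : Type*} {P : α → Prop} {p q : α} (hpq : p ≠ q) (hp : P p) (hq : P q)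
    (h : ∃ a b, a ≠ b ∧ P a ∧ P b ∧ ∀ z, P z → z = a ∨ z = b) :
    ∀ z, P z → z = p ∨ z = q := by
  obtain ⟨a, b, hab, _, _, hall⟩ := h
  intro z hz
  rcases hall p hp with rfl | rfl <;> rcases hall q hq with rfl | rfl <;>
    rcases hall z hz with rfl | rfl <;> tauto

lemma aux_three_absurd {α : Type*} {P : α → Prop} {p q r : α} (hp : P p) (hq : P q) (hr : P r)
    (hpq : p ≠ q) (hpr : p ≠ r) (hqr : q ≠ r)
    (h : ∃ a b, a ≠ b ∧ P a ∧ P b ∧ ∀ z, P z → z = a ∨ z = b) : False := by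
  obtain ⟨a, b, hab, _, _, hall⟩ := h
  rcases hall p hp with rfl | rfl <;> rcases hall q hq with rfl | rfl <;>
    rcases hall r hr with rfl | rfl <;> tauto
/-- The cycle `C = a v₁ u₂ v₂ g u₁ v₅ e f v₄ u₃ v₃ b a` in `Ĥ` is a cycle and is
not extendable: there is no cycle in `Ĥ` on the vertex set `V(C) ∪ {w}` for any
vertex `w ∉ V(C)`. -/
theorem stmt17 : Cwalk.IsCycle ∧ ¬ CycleExtendable Hhat Cwalk := by
  constructor
  · rw [SimpleGraph.Walk.isCycle_def]
    refine ⟨?_, ?_, ?_⟩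
    · rw [SimpleGraph.Walk.isTrail_def]; decide
    · simp [Cwalk]
    · decide
  · rintro ⟨w, u, c', hc', hw, hsupp⟩
    set H := c'.toSubgraph with hH
    have hmem : ∀ x y : Fin 15, H.Adj x y → y ∈ c'.support := by
      intro x y h
      have := h.snd_mem
      rwa [SimpleGraph.Walk.mem_verts_toSubgraph] at this
    have key : ∀ x : Fin 15, x ∈ c'.support →
        ∃ a b, a ≠ b ∧ H.Adj x a ∧ H.Adj x b ∧ ∀ z, H.Adj x z → z = a ∨ z = b :=
      fun x hx => aux_cycle_two_nbrs hc' hx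
    have hs : ∀ x : Fin 15, x ∈ Cwalk.support → x ∈ c'.support :=
      fun x hx => (hsupp x).2 (Or.inl hx)
    have nb : ∀ x z : Fin 15, H.Adj x z → Hhat.Adj x z ∧ (z ∈ Cwalk.support ∨ z = w) :=
      fun x z hz => ⟨hz.adj_sub, (hsupp z).1 (hmem _ _ hz)⟩
    have hle : ∀ (x : Fin 15) (hx : x ∈ c'.support), (c'.takeUntil x hx).toSubgraph ≤ H := by
      intro x hx
      conv_rhs => rw [hH, ← SimpleGraph.Walk.take_spec c' hx]
      rw [SimpleGraph.Walk.toSubgraph_append]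
      exact le_sup_left
    have hw23 : w = 2 ∨ w = 3 :=
      (by decide : ∀ w : Fin 15, w ∉ Cwalk.support → w = 2 ∨ w = 3) w hw
    rcases hw23 with rfl | rfl
    · -- case w = 2
      have sub10 : ∀ z, H.Adj 10 z → z = 0 ∨ z = 8 := fun z hz =>
        (by decide : ∀ z : Fin 15, Hhat.Adj 10 z → (z ∈ Cwalk.support ∨ z = 2) →
          z = 0 ∨ z = 8) z (nb _ _ hz).1 (nb _ _ hz).2
      have sub11 : ∀ z, H.Adj 11 z → z = 8 ∨ z = 6 := fun z hz =>
        (by decide : ∀ z : Fin 15, Hhat.Adj 11 z → (z ∈ Cwalk.support ∨ z = 2) →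
          z = 8 ∨ z = 6) z (nb _ _ hz).1 (nb _ _ hz).2
      have sub12 : ∀ z, H.Adj 12 z → z = 1 ∨ z = 9 := fun z hz =>
        (by decide : ∀ z : Fin 15, Hhat.Adj 12 z → (z ∈ Cwalk.support ∨ z = 2) →
          z = 1 ∨ z = 9) z (nb _ _ hz).1 (nb _ _ hz).2
      have sub13 : ∀ z, H.Adj 13 z → z = 9 ∨ z = 5 := fun z hz =>
        (by decide : ∀ z : Fin 15, Hhat.Adj 13 z → (z ∈ Cwalk.support ∨ z = 2) →
          z = 9 ∨ z = 5) z (nb _ _ hz).1 (nb _ _ hz).2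
      have sub14 : ∀ z, H.Adj 14 z → z = 4 ∨ z = 7 := fun z hz =>
        (by decide : ∀ z : Fin 15, Hhat.Adj 14 z → (z ∈ Cwalk.support ∨ z = 2) →
          z = 4 ∨ z = 7) z (nb _ _ hz).1 (nb _ _ hz).2
      obtain ⟨f10a, f10b⟩ := aux_two_of_sub (by decide) sub10 (key 10 (hs 10 (by decide)))
      obtain ⟨f11a, f11b⟩ := aux_two_of_sub (by decide) sub11 (key 11 (hs 11 (by decide)))
      obtain ⟨f12a, f12b⟩ := aux_two_of_sub (by decide) sub12 (key 12 (hs 12 (by decide)))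
      obtain ⟨f13a, f13b⟩ := aux_two_of_sub (by decide) sub13 (key 13 (hs 13 (by decide)))
      obtain ⟨f14a, f14b⟩ := aux_two_of_sub (by decide) sub14 (key 14 (hs 14 (by decide)))
      have sat8 := aux_sat_of_two (p := 10) (q := 11) (by decide) f10b.symm f11a.symm
        (key 8 (hs 8 (by decide)))
      have sat9 := aux_sat_of_two (p := 12) (q := 13) (by decide) f12b.symm f13a.symm
        (key 9 (hs 9 (by decide)))
      have sub2 : ∀ z, H.Adj 2 z → z = 1 ∨ z = 7 := by
        intro z hz
        have base : z = 1 ∨ z = 7 ∨ z = 8 ∨ z = 9 :=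
          (by decide : ∀ z : Fin 15, Hhat.Adj 2 z → (z ∈ Cwalk.support ∨ z = 2) →
            z = 1 ∨ z = 7 ∨ z = 8 ∨ z = 9) z (nb _ _ hz).1 (nb _ _ hz).2
        rcases base with rfl | rfl | rfl | rfl
        · exact Or.inl rfl
        · exact Or.inr rfl
        · rcases sat8 2 hz.symm with h | h <;> exact absurd h (by decide)
        · rcases sat9 2 hz.symm with h | h <;> exact absurd h (by decide)
      obtain ⟨f2a, f2b⟩ := aux_two_of_sub (by decide) sub2 (key 2 ((hsupp 2).2 (Or.inr rfl)))
      have sat1 := aux_sat_of_two (p := 12) (q := 2) (by decide) f12a.symm f2a.symm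
        (key 1 (hs 1 (by decide)))
      have sub0 : ∀ z, H.Adj 0 z → z = 7 ∨ z = 10 := by
        intro z hz
        have base : z = 1 ∨ z = 7 ∨ z = 8 ∨ z = 9 ∨ z = 10 :=
          (by decide : ∀ z : Fin 15, Hhat.Adj 0 z → (z ∈ Cwalk.support ∨ z = 2) →
            z = 1 ∨ z = 7 ∨ z = 8 ∨ z = 9 ∨ z = 10) z (nb _ _ hz).1 (nb _ _ hz).2
        rcases base with rfl | rfl | rfl | rfl | rfl
        · rcases sat1 0 hz.symm with h | h <;> exact absurd h (by decide)
        · exact Or.inl rfl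
        · rcases sat8 0 hz.symm with h | h <;> exact absurd h (by decide)
        · rcases sat9 0 hz.symm with h | h <;> exact absurd h (by decide)
        · exact Or.inr rfl
      obtain ⟨f0a, f0b⟩ := aux_two_of_sub (by decide) sub0 (key 0 (hs 0 (by decide)))
      exact aux_three_absurd f14b.symm f2b.symm f0a.symm (by decide) (by decide) (by decide)
        (key 7 (hs 7 (by decide)))
    · -- case w = 3
      have sub10 : ∀ z, H.Adj 10 z → z = 0 ∨ z = 8 := fun z hz =>
        (by decide : ∀ z : Fin 15, Hhat.Adj 10 z → (z ∈ Cwalk.support ∨ z = 3) →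
          z = 0 ∨ z = 8) z (nb _ _ hz).1 (nb _ _ hz).2
      have sub11 : ∀ z, H.Adj 11 z → z = 8 ∨ z = 6 := fun z hz =>
        (by decide : ∀ z : Fin 15, Hhat.Adj 11 z → (z ∈ Cwalk.support ∨ z = 3) →
          z = 8 ∨ z = 6) z (nb _ _ hz).1 (nb _ _ hz).2
      have sub12 : ∀ z, H.Adj 12 z → z = 1 ∨ z = 9 := fun z hz =>
        (by decide : ∀ z : Fin 15, Hhat.Adj 12 z → (z ∈ Cwalk.support ∨ z = 3) →
          z = 1 ∨ z = 9) z (nb _ _ hz).1 (nb _ _ hz).2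
      have sub13 : ∀ z, H.Adj 13 z → z = 9 ∨ z = 5 := fun z hz =>
        (by decide : ∀ z : Fin 15, Hhat.Adj 13 z → (z ∈ Cwalk.support ∨ z = 3) →
          z = 9 ∨ z = 5) z (nb _ _ hz).1 (nb _ _ hz).2
      have sub14 : ∀ z, H.Adj 14 z → z = 4 ∨ z = 7 := fun z hz =>
        (by decide : ∀ z : Fin 15, Hhat.Adj 14 z → (z ∈ Cwalk.support ∨ z = 3) →
          z = 4 ∨ z = 7) z (nb _ _ hz).1 (nb _ _ hz).2
      obtain ⟨f10a, f10b⟩ := aux_two_of_sub (by decide) sub10 (key 10 (hs 10 (by decide)))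
      obtain ⟨f11a, f11b⟩ := aux_two_of_sub (by decide) sub11 (key 11 (hs 11 (by decide)))
      obtain ⟨f12a, f12b⟩ := aux_two_of_sub (by decide) sub12 (key 12 (hs 12 (by decide)))
      obtain ⟨f13a, f13b⟩ := aux_two_of_sub (by decide) sub13 (key 13 (hs 13 (by decide)))
      obtain ⟨f14a, f14b⟩ := aux_two_of_sub (by decide) sub14 (key 14 (hs 14 (by decide)))
      have sat8 := aux_sat_of_two (p := 10) (q := 11) (by decide) f10b.symm f11a.symm
        (key 8 (hs 8 (by decide)))
      have sat9 := aux_sat_of_two (p := 12) (q := 13) (by decide) f12b.symm f13a.symm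
        (key 9 (hs 9 (by decide)))
      have sub3 : ∀ z, H.Adj 3 z → z = 4 ∨ z = 7 := by
        intro z hz
        have base : z = 4 ∨ z = 7 ∨ z = 8 ∨ z = 9 :=
          (by decide : ∀ z : Fin 15, Hhat.Adj 3 z → (z ∈ Cwalk.support ∨ z = 3) →
            z = 4 ∨ z = 7 ∨ z = 8 ∨ z = 9) z (nb _ _ hz).1 (nb _ _ hz).2
        rcases base with rfl | rfl | rfl | rfl
        · exact Or.inl rfl
        · exact Or.inr rfl
        · rcases sat8 3 hz.symm with h | h <;> exact absurd h (by decide)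
        · rcases sat9 3 hz.symm with h | h <;> exact absurd h (by decide)
      obtain ⟨f3a, f3b⟩ := aux_two_of_sub (by decide) sub3 (key 3 ((hsupp 3).2 (Or.inr rfl)))
      have sat7 := aux_sat_of_two (p := 14) (q := 3) (by decide) f14b.symm f3b.symm
        (key 7 (hs 7 (by decide)))
      have sat4 := aux_sat_of_two (p := 14) (q := 3) (by decide) f14a.symm f3a.symm
        (key 4 (hs 4 (by decide)))
      set A : Set (Fin 15) := {z : Fin 15 | z = 3 ∨ z = 4 ∨ z = 14 ∨ z = 7} with hA
      have hAc : ∀ ⦃x y : Fin 15⦄, x ∈ A → H.Adj x y → y ∈ A := by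
        rintro x y (rfl | rfl | rfl | rfl) hxy
        · rcases sub3 y hxy with rfl | rfl
          · exact Or.inr (Or.inl rfl)
          · exact Or.inr (Or.inr (Or.inr rfl))
        · rcases sat4 y hxy with rfl | rfl
          · exact Or.inr (Or.inr (Or.inl rfl))
          · exact Or.inl rfl
        · rcases sub14 y hxy with rfl | rfl
          · exact Or.inr (Or.inl rfl)
          · exact Or.inr (Or.inr (Or.inr rfl))
        · rcases sat7 y hxy with rfl | rfl
          · exact Or.inr (Or.inr (Or.inl rfl))
          · exact Or.inl rfl
      have h3 : (3 : Fin 15) ∈ c'.support := (hsupp 3).2 (Or.inr rfl)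
      have h0 : (0 : Fin 15) ∈ c'.support := hs 0 (by decide)
      have hple : ((c'.takeUntil 3 h3).reverse.append (c'.takeUntil 0 h0)).toSubgraph ≤ H := by
        rw [SimpleGraph.Walk.toSubgraph_append, SimpleGraph.Walk.toSubgraph_reverse]
        exact sup_le (hle _ h3) (hle _ h0)
      have h0A : (0 : Fin 15) ∈ A :=
        aux_closed_walk H A hAc ((c'.takeUntil 3 h3).reverse.append (c'.takeUntil 0 h0)) hple
          (Or.inl rfl)
      rcases h0A with h | h | h | h <;> exact absurd h (by decide)
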